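/- Let A be an n×n Hermitian complex matrix with Tr A < 0. Then the number of negative eigenvalues of A, counted with multiplicity, is at least (Tr A)² / ‖A‖_F², where ‖A‖_F² = Σ_{i,j} |A_{ij}|² is the squared Frobenius (Hilbert–Schmidt) norm. -/

import Mathlib

open Matrix Finset

lemma trace_eq_sum_eig {n : ℕ} (A : Matrix (Fin n) (Fin n) ℂ) (hA : A.IsHermitian) :
    A.trace = ∑ i, (hA.eigenvalues i : ℂ) := by
  conv_lhs => rw [hA.spectral_theorem, Unitary.conjStarAlgAut_apply]
  rw [Matrix.trace_mul_cycle,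
    (Matrix.mem_unitaryGroup_iff').mp (hA.eigenvectorUnitary).2, Matrix.one_mul,
    Matrix.trace_diagonal]
  rfl

lemma trace_sq_eq_sum_eig_sq {n : ℕ} (A : Matrix (Fin n) (Fin n) ℂ) (hA : A.IsHermitian) :
    (A * A).trace = ∑ i, (hA.eigenvalues i : ℂ) ^ 2 := by
  conv_lhs => rw [hA.spectral_theorem, Unitary.conjStarAlgAut_apply]
  rw [show ((hA.eigenvectorUnitary : Matrix (Fin n) (Fin n) ℂ) *
        diagonal (RCLike.ofReal ∘ hA.eigenvalues) * (star hA.eigenvectorUnitary :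
          Matrix (Fin n) (Fin n) ℂ)) *
      ((hA.eigenvectorUnitary : Matrix (Fin n) (Fin n) ℂ) *
        diagonal (RCLike.ofReal ∘ hA.eigenvalues) * (star hA.eigenvectorUnitary :
          Matrix (Fin n) (Fin n) ℂ)) =
      (hA.eigenvectorUnitary : Matrix (Fin n) (Fin n) ℂ) *
        (diagonal (RCLike.ofReal ∘ hA.eigenvalues) * diagonal (RCLike.ofReal ∘ hA.eigenvalues)) *
        (star hA.eigenvectorUnitary : Matrix (Fin n) (Fin n) ℂ) by
    simp only [Matrix.mul_assoc]
    rw [← Matrix.mul_assoc (star hA.eigenvectorUnitary : Matrix (Fin n) (Fin n) ℂ)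
        (hA.eigenvectorUnitary : Matrix (Fin n) (Fin n) ℂ),
      (Matrix.mem_unitaryGroup_iff').mp (hA.eigenvectorUnitary).2, Matrix.one_mul]]
  rw [Matrix.trace_mul_cycle,
    (Matrix.mem_unitaryGroup_iff').mp (hA.eigenvectorUnitary).2, Matrix.one_mul,
    Matrix.diagonal_mul_diagonal, Matrix.trace_diagonal]
  simp [sq]

/-- For an `n × n` Hermitian complex matrix `A` with `Tr A < 0`, the number of
negative eigenvalues of `A` (with multiplicity) is at least `(Tr A)² / ‖A‖_F²`. -/
theorem stmt2 {n : ℕ} (A : Matrix (Fin n) (Fin n) ℂ) (hA : A.IsHermitian)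
    (htr : (A.trace).re < 0) :
    (A.trace).re ^ 2 / (∑ i, ∑ j, ‖A i j‖ ^ 2) ≤
      ((Finset.univ.filter fun i => hA.eigenvalues i < 0).card : ℝ) := by
  set μ := hA.eigenvalues with hμ
  have hF : (∑ i, ∑ j, ‖A i j‖ ^ 2) = ∑ i, μ i ^ 2 := by
    have h1 : (∑ i, ∑ j, ‖A i j‖ ^ 2) = ((A * A).trace).re := by
      rw [Matrix.trace, Complex.re_sum]
      rw [Finset.sum_comm]
      refine Finset.sum_congr rfl fun j _ => ?_
      rw [Matrix.diag_apply, Matrix.mul_apply, Complex.re_sum]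
      refine Finset.sum_congr rfl fun i _ => ?_
      have h2 : A j i = star (A i j) := by
        conv_lhs => rw [← hA]
        rfl
      rw [h2]
      simp only [RCLike.star_def, Complex.sq_norm, Complex.normSq_apply,
        Complex.mul_re, Complex.conj_re, Complex.conj_im]
      ring
    rw [h1, trace_sq_eq_sum_eig_sq A hA, Complex.re_sum]
    simp [← Complex.ofReal_pow, hμ]
  have htr' : (A.trace).re = ∑ i, μ i := by
    rw [trace_eq_sum_eig A hA, Complex.re_sum]; simp [hμ]
  set S := Finset.univ.filter fun i => μ i < 0 with hS
  have hsplit : ∑ i ∈ S, μ i ≤ ∑ i, μ i := by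
    refine Finset.sum_le_sum_of_subset_of_nonneg (Finset.subset_univ _) fun i _ hi => ?_
    simp only [hS, Finset.mem_filter, Finset.mem_univ, true_and] at hi
    linarith [not_lt.mp hi]
  have hneg : ∑ i ∈ S, μ i ≤ (A.trace).re := by rw [htr']; exact hsplit
  have hsq : (A.trace).re ^ 2 ≤ (∑ i ∈ S, μ i) ^ 2 := by
    have := sq_le_sq' (by linarith : -(-(∑ i ∈ S, μ i)) ≤ (A.trace).re) (by linarith)
    calc (A.trace).re ^ 2 ≤ (-(∑ i ∈ S, μ i)) ^ 2 := this
      _ = (∑ i ∈ S, μ i) ^ 2 := by ring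
  have hCS : (∑ i ∈ S, μ i) ^ 2 ≤ S.card * ∑ i ∈ S, μ i ^ 2 :=
    sq_sum_le_card_mul_sum_sq
  have hsub : ∑ i ∈ S, μ i ^ 2 ≤ ∑ i, μ i ^ 2 :=
    Finset.sum_le_sum_of_subset_of_nonneg (Finset.subset_univ _) fun i _ _ => sq_nonneg _
  have hkey : (A.trace).re ^ 2 ≤ S.card * ∑ i, μ i ^ 2 := by
    calc (A.trace).re ^ 2 ≤ (∑ i ∈ S, μ i) ^ 2 := hsq
      _ ≤ S.card * ∑ i ∈ S, μ i ^ 2 := hCS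
      _ ≤ S.card * ∑ i, μ i ^ 2 := by
          exact mul_le_mul_of_nonneg_left hsub (Nat.cast_nonneg _)
  rw [hF]
  rcases eq_or_lt_of_le (Finset.sum_nonneg fun i _ => sq_nonneg (μ i)) with h0 | h0
  · rw [← h0, div_zero]; exact Nat.cast_nonneg _
  · rw [div_le_iff₀ h0]; exact hkey
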